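/- Let D be a τ-atomic integral domain with τ symmetric and associate preserving. If G_τ(x) is a pseudoclique (a complete graph possibly with loops) for every x ∈ D^#, then D is a τ-UFD. -/

import Mathlib

/-- `a` is a nonzero nonunit, i.e. an element of `D^#`. -/
def NzNonunit {D : Type*} [CommRing D] (a : D) : Prop := a ≠ 0 ∧ ¬ IsUnit a

/-- `l` is the list of factors of a `τ`-factorization of `a`:
`a = λ * l.prod` for a unit `λ`, the factors are nonzero nonunits and pairwise `τ`-related. -/
def TauFact {D : Type*} [CommRing D] (τ : D → D → Prop) (l : List D) (a : D) : Prop :=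
  l ≠ [] ∧ (∀ b ∈ l, NzNonunit b) ∧ l.Pairwise τ ∧ ∃ u : Dˣ, a = (u : D) * l.prod

/-- `b` τ-divides `a`: `b` occurs as a factor in some τ-factorization of `a`. -/
def TauDvd {D : Type*} [CommRing D] (τ : D → D → Prop) (b a : D) : Prop :=
  ∃ l, TauFact τ l a ∧ b ∈ l

/-- `a` is τ-irreducible (a τ-atom): all its τ-factorizations are trivial. -/
def TauIrred {D : Type*} [CommRing D] (τ : D → D → Prop) (a : D) : Prop :=
  NzNonunit a ∧ ∀ l, TauFact τ l a → l.length = 1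

/-- `l` is a τ-atomic factorization of `a`. -/
def TauAtomicFact {D : Type*} [CommRing D] (τ : D → D → Prop) (l : List D) (a : D) : Prop :=
  TauFact τ l a ∧ ∀ b ∈ l, TauIrred τ b

/-- `D` is τ-atomic: every nonzero nonunit has a τ-atomic factorization. -/
def TauAtomic {D : Type*} [CommRing D] (τ : D → D → Prop) : Prop :=
  ∀ a : D, NzNonunit a → ∃ l, TauAtomicFact τ l a

def TauSymm {D : Type*} [CommRing D] (τ : D → D → Prop) : Prop :=
  ∀ a b, τ a b → τ b a

/-- τ is associate preserving. -/
def TauAssocPres {D : Type*} [CommRing D] (τ : D → D → Prop) : Prop :=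
  ∀ a b b' : D, τ a b → Associated b b' → τ a b'

/-- τ is refinable: replacing each factor of a τ-factorization by a
τ-factorization of it again yields a τ-factorization. -/
def TauRefinable {D : Type*} [CommRing D] (τ : D → D → Prop) : Prop :=
  ∀ (a : D) (l : List D) (F : List (List D)),
    TauFact τ l a → List.Forall₂ (fun b m => TauFact τ m b) l F →
    TauFact τ F.flatten a

/-- `a` is a vertex of the τ-irreducible divisor graph `G_τ(x)`. -/
def GVert {D : Type*} [CommRing D] (τ : D → D → Prop) (x a : D) : Prop :=
  TauIrred τ a ∧ TauDvd τ a x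

/-- `a` and `b` are adjacent (distinct, i.e. non-associated, vertices joined by an edge)
in `G_τ(x)`: some τ-factorization of `x` contains associates of both. -/
def GAdj {D : Type*} [CommRing D] (τ : D → D → Prop) (x a b : D) : Prop :=
  GVert τ x a ∧ GVert τ x b ∧ ¬ Associated a b ∧
  ∃ l, TauFact τ l x ∧ (∃ a' ∈ l, Associated a a') ∧ (∃ b' ∈ l, Associated b b')

/-- `G_τ(x)` is connected (vertices are taken up to associates). -/
def GConnected {D : Type*} [CommRing D] (τ : D → D → Prop) (x : D) : Prop :=
  ∀ a b, GVert τ x a → GVert τ x b →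
    Relation.ReflTransGen (fun u v => GAdj τ x u v ∨ Associated u v) a b

/-- The reduced graph `G̅_τ(x)` (loops deleted) is connected; loops do not affect
connectivity, so this is connectivity with respect to the same adjacency relation. -/
def GBarConnected {D : Type*} [CommRing D] (τ : D → D → Prop) (x : D) : Prop :=
  ∀ a b, GVert τ x a → GVert τ x b →
    Relation.ReflTransGen (fun u v => GAdj τ x u v ∨ Associated u v) a b

/-- `G_τ(x)` is a pseudoclique: any two non-associated vertices are adjacent.
(Equivalently, the reduced graph `G̅_τ(x)` is a clique / complete graph.) -/
def GPseudoclique {D : Type*} [CommRing D] (τ : D → D → Prop) (x : D) : Prop :=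
  ∀ a b, GVert τ x a → GVert τ x b → ¬ Associated a b → GAdj τ x a b

/-- `Diam(G_τ(x)) ≤ 1`: any two vertices are equal (associated) or adjacent. -/
def GDiamLeOne {D : Type*} [CommRing D] (τ : D → D → Prop) (x : D) : Prop :=
  ∀ a b, GVert τ x a → GVert τ x b → Associated a b ∨ GAdj τ x a b

/-- `G_τ(x)` has finitely many vertices (up to associates). -/
def GVertFinite {D : Type*} [CommRing D] (τ : D → D → Prop) (x : D) : Prop :=
  ∃ s : Finset D, ∀ a, GVert τ x a → ∃ c ∈ s, Associated a c

/-- The vertex `a` of `G_τ(x)` has finite degree: finitely many adjacent vertices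
up to associates (loops not counted). -/
def GDegFinite {D : Type*} [CommRing D] (τ : D → D → Prop) (x a : D) : Prop :=
  ∃ s : Finset D, ∀ b, GAdj τ x a b → ∃ c ∈ s, Associated b c

/-- The vertex `a` of `G_τ(x)` carries finitely many loops: there is a uniform bound on
the number of occurrences of associates of `a` in τ-atomic factorizations of `x`. -/
def GLoopsFinite {D : Type*} [CommRing D] (τ : D → D → Prop) (x a : D) : Prop :=
  ∃ N : ℕ, ∀ l m : List D, TauAtomicFact τ l x → m.Sublist l →
    (∀ b ∈ m, Associated a b) → m.length ≤ N

/-- `D` satisfies τ-ACCP. -/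
def TauACCP {D : Type*} [CommRing D] (τ : D → D → Prop) : Prop :=
  ∀ a : ℕ → D, (∀ i, TauDvd τ (a (i + 1)) (a i)) →
    ∃ N, ∀ i, N ≤ i → Associated (a i) (a N)

/-- `D` is a τ-UFD. -/
def TauUFD {D : Type*} [CommRing D] (τ : D → D → Prop) : Prop :=
  TauAtomic τ ∧ ∀ (x : D) (l₁ l₂ : List D), TauAtomicFact τ l₁ x → TauAtomicFact τ l₂ x →
    Multiset.Rel Associated (l₁ : Multiset D) (l₂ : Multiset D)

/-- `D` is a τ-FFD: each nonzero nonunit has only finitely many τ-factorizations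
up to rearrangement and associates. -/
def TauFFD {D : Type*} [CommRing D] (τ : D → D → Prop) : Prop :=
  ∀ x : D, NzNonunit x → ∃ S : Finset (Multiset D),
    ∀ l : List D, TauFact τ l x → ∃ m ∈ S, Multiset.Rel Associated (l : Multiset D) m

/-- `D` is a τ-WFFD: each nonzero nonunit has finitely many τ-divisors up to associates. -/
def TauWFFD {D : Type*} [CommRing D] (τ : D → D → Prop) : Prop :=
  ∀ x : D, NzNonunit x → ∃ s : Finset D,
    ∀ b, TauDvd τ b x → ∃ c ∈ s, Associated b c

/-- `D` is a τ-idf domain: each nonzero nonunit has finitely many τ-irreducible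
τ-divisors up to associates. -/
def TauIdf {D : Type*} [CommRing D] (τ : D → D → Prop) : Prop :=
  ∀ x : D, NzNonunit x → ∃ s : Finset D,
    ∀ b, TauIrred τ b → TauDvd τ b x → ∃ c ∈ s, Associated b c



set_option linter.unusedSectionVars false
section Aux

variable {D : Type*} [CommRing D] [IsDomain D] {τ : D → D → Prop}

lemma isUnit_of_mem_of_isUnit_prod {l : List D} (h : IsUnit l.prod) :
    ∀ b ∈ l, IsUnit b := by
  induction l with
  | nil => simp
  | cons a t ih =>
    rw [List.prod_cons] at h
    intro b hb
    rcases List.mem_cons.1 hb with rfl | hb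
    · exact isUnit_of_mul_isUnit_left h
    · exact ih (isUnit_of_mul_isUnit_right h) b hb

lemma nzn_of_fact {l : List D} {x : D} (h : TauFact τ l x) : NzNonunit x := by
  obtain ⟨hne, hmem, _, u, hx⟩ := h
  constructor
  · rw [hx]
    refine mul_ne_zero u.ne_zero (List.prod_ne_zero ?_)
    intro h0
    exact (hmem 0 h0).1 rfl
  · intro hu
    rw [hx] at hu
    have hpu := isUnit_of_mul_isUnit_right hu
    obtain ⟨b, hb⟩ := List.exists_mem_of_ne_nil l hne
    exact (hmem b hb).2 (isUnit_of_mem_of_isUnit_prod hpu b hb)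

lemma nzn_assoc {a b : D} (h : NzNonunit a) (hab : Associated a b) : NzNonunit b := by
  obtain ⟨t, ht⟩ := hab
  constructor
  · rw [← ht]; exact mul_ne_zero h.1 t.ne_zero
  · intro hu; rw [← ht] at hu; exact h.2 (isUnit_of_mul_isUnit_left hu)

lemma fact_assoc {l : List D} {x a : D} (h : TauFact τ l x) (ha : Associated x a) :
    TauFact τ l a := by
  obtain ⟨hne, hmem, hp, u, hx⟩ := h
  obtain ⟨t, ht⟩ := ha
  exact ⟨hne, hmem, hp, u * t, by rw [← ht, hx]; push_cast; ring⟩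

lemma irred_assoc {a b : D} (h : TauIrred τ a) (hab : Associated a b) : TauIrred τ b :=
  ⟨nzn_assoc h.1 hab, fun l hl => h.2 l (fact_assoc hl hab.symm)⟩

lemma fact_erase [DecidableEq D] {l : List D} {x a : D} (h : TauFact τ l x) (ha : a ∈ l)
    (hne : l.erase a ≠ []) :
    TauFact τ (l.erase a) ((l.erase a).prod) ∧ ∃ u : Dˣ, x = u * (a * (l.erase a).prod) := by
  obtain ⟨_, hmem, hp, u, hx⟩ := h
  refine ⟨⟨hne, fun b hb => hmem b (List.mem_of_mem_erase hb),
    hp.sublist (List.erase_sublist), 1, by simp⟩, u, ?_⟩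
  rw [hx, ← List.prod_erase ha]

/-- Key lemma: every τ-irreducible member of any τ-factorization of `x` is associated
to some member of any τ-atomic factorization of `x`. -/
lemma key_lemma [DecidableEq D] (hpc : ∀ x : D, NzNonunit x → GPseudoclique τ x) :
    ∀ (n : ℕ) (x : D) (l₁ l : List D), l₁.length = n → TauAtomicFact τ l₁ x →
      TauFact τ l x → ∀ c ∈ l, TauIrred τ c → ∃ a ∈ l₁, Associated c a := by
  intro n
  induction n with
  | zero =>
    intro x l₁ l hlen h₁ _ _ _ _
    exact absurd (List.length_eq_zero_iff.mp hlen) h₁.1.1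
  | succ n ih =>
    intro x l₁ l hlen h₁ hl c hc hcirr
    obtain ⟨a, rest, rfl⟩ : ∃ a rest, l₁ = a :: rest := by
      cases l₁ with
      | nil => exact absurd rfl h₁.1.1
      | cons a rest => exact ⟨a, rest, rfl⟩
    by_cases hrest : rest = []
    · -- x is (up to a unit) the single irreducible a
      subst hrest
      obtain ⟨_, _, _, u, hx1⟩ := h₁.1
      simp only [List.prod_cons, List.prod_nil, mul_one] at hx1
      have hax : Associated a x := ⟨u, by rw [hx1, mul_comm]⟩
      have hxa : Associated x a := hax.symm
      have hlen1 : l.length = 1 :=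
        (h₁.2 a (List.mem_cons_self)).2 l (fact_assoc hl hxa)
      obtain ⟨b, rfl⟩ := List.length_eq_one_iff.mp hlen1
      have hcb : c = b := List.mem_singleton.mp hc
      subst hcb
      obtain ⟨_, _, _, v, hav⟩ := fact_assoc hl hxa
      simp only [List.prod_cons, List.prod_nil, mul_one] at hav
      exact ⟨a, List.mem_cons_self, ⟨v, by rw [hav, mul_comm]⟩⟩
    · by_contra hno
      push_neg at hno
      have hx : NzNonunit x := nzn_of_fact h₁.1
      have hca : ¬ Associated c a := hno a (List.mem_cons_self)
      have hvc : GVert τ x c := ⟨hcirr, l, hl, hc⟩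
      have hva : GVert τ x a :=
        ⟨h₁.2 a (List.mem_cons_self), a :: rest, h₁.1, List.mem_cons_self⟩
      obtain ⟨-, -, -, l', hl', ⟨c', hc'm, hcc'⟩, ⟨a', ha'm, haa'⟩⟩ :=
        hpc x hx c a hvc hva hca
      have hc'a' : c' ≠ a' := by
        intro h
        exact hca (hcc'.trans (h ▸ haa'.symm))
      have hc'e : c' ∈ l'.erase a' := (List.mem_erase_of_ne hc'a').mpr hc'm
      have hene : l'.erase a' ≠ [] := List.ne_nil_of_mem hc'e
      obtain ⟨hfe, v, hxe⟩ := fact_erase hl' ha'm hene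
      set y := (l'.erase a').prod with hy
      obtain ⟨w, hw⟩ := haa'
      obtain ⟨-, hmem₁, hp₁, u, hx1⟩ := h₁.1
      have hane : a ≠ 0 := (h₁.2 a (List.mem_cons_self)).1.1
      have h2 : a * ((u : D) * rest.prod) = a * ((v : D) * ((w : D) * y)) := by
        have e1 : x = (u : D) * (a * rest.prod) := by rw [hx1, List.prod_cons]
        calc a * ((u : D) * rest.prod) = (u : D) * (a * rest.prod) := by ring
          _ = (v : D) * (a' * y) := by rw [← e1, hxe]
          _ = a * ((v : D) * ((w : D) * y)) := by rw [← hw]; ring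
      have hcancel : (u : D) * rest.prod = (v : D) * ((w : D) * y) :=
        mul_left_cancel₀ hane h2
      have h3 : ((v * w : Dˣ) : D) * y = (u : D) * rest.prod := by
        push_cast
        linear_combination - hcancel
      have hyeq : y = (((v * w)⁻¹ * u : Dˣ) : D) * rest.prod := by
        calc y = (((v * w)⁻¹ : Dˣ) : D) * (((v * w : Dˣ) : D) * y) := by
              rw [← mul_assoc, Units.inv_mul, one_mul]
          _ = (((v * w)⁻¹ : Dˣ) : D) * ((u : D) * rest.prod) := by rw [h3]
          _ = (((v * w)⁻¹ * u : Dˣ) : D) * rest.prod := by push_cast; ring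
      have hyfact : TauFact τ rest y :=
        ⟨hrest, fun b hb => hmem₁ b (List.mem_cons_of_mem a hb), hp₁.of_cons,
          (v * w)⁻¹ * u, hyeq⟩
      have hyatomic : TauAtomicFact τ rest y :=
        ⟨hyfact, fun b hb => h₁.2 b (List.mem_cons_of_mem a hb)⟩
      have hrlen : rest.length = n := by
        simpa using hlen
      obtain ⟨a₂, ha₂m, hass⟩ :=
        ih y rest (l'.erase a') hrlen hyatomic hfe c' hc'e (irred_assoc hcirr hcc')
      exact hno a₂ (List.mem_cons_of_mem a ha₂m) (hcc'.trans hass)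

lemma uniq_lemma [DecidableEq D] (hpc : ∀ x : D, NzNonunit x → GPseudoclique τ x) :
    ∀ (n : ℕ) (x : D) (l₁ l₂ : List D), l₁.length = n →
      TauAtomicFact τ l₁ x → TauAtomicFact τ l₂ x →
      Multiset.Rel Associated (l₁ : Multiset D) (l₂ : Multiset D) := by
  intro n
  induction n with
  | zero =>
    intro x l₁ l₂ hlen h₁ _
    exact absurd (List.length_eq_zero_iff.mp hlen) h₁.1.1
  | succ n ih =>
    intro x l₁ l₂ hlen h₁ h₂
    obtain ⟨c, hc⟩ := List.exists_mem_of_ne_nil l₂ h₂.1.1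
    obtain ⟨a', ha'm, hca'⟩ :=
      key_lemma hpc (n+1) x l₁ l₂ hlen h₁ h₂.1 c hc (h₂.2 c hc)
    by_cases he₁ : l₁.erase a' = []
    · -- l₁ = [a']
      have hlen1 : l₁.length = 1 := by
        have h0 := List.length_erase_of_mem ha'm
        rw [he₁] at h0
        simp only [List.length_nil] at h0
        have hpos : 0 < l₁.length := List.length_pos_iff.mpr (List.ne_nil_of_mem ha'm)
        omega
      obtain ⟨z, rfl⟩ := List.length_eq_one_iff.mp hlen1
      have hza : z = a' := (List.mem_singleton.mp ha'm).symm
      subst hza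
      obtain ⟨-, -, -, u, hx1⟩ := h₁.1
      simp only [List.prod_cons, List.prod_nil, mul_one] at hx1
      have hzx : Associated z x := ⟨u, by rw [hx1, mul_comm]⟩
      have hxa : Associated x z := hzx.symm
      have hlen2 : l₂.length = 1 :=
        (h₁.2 z (List.mem_singleton_self z)).2 l₂ (fact_assoc h₂.1 hxa)
      obtain ⟨b, rfl⟩ := List.length_eq_one_iff.mp hlen2
      have hcb : c = b := List.mem_singleton.mp hc
      subst hcb
      have : Multiset.Rel Associated (z ::ₘ 0) (c ::ₘ 0) :=
        Multiset.Rel.cons (Associated.symm hca') Multiset.Rel.zero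
      simpa using this
    · have hcirr : TauIrred τ c := h₂.2 c hc
      have he₂ : l₂.erase c ≠ [] := by
        intro he
        have hlen2 : l₂.length = 1 := by
          have h0 := List.length_erase_of_mem hc
          rw [he] at h0
          simp only [List.length_nil] at h0
          have hpos : 0 < l₂.length := List.length_pos_iff.mpr h₂.1.1
          omega
        obtain ⟨b, rfl⟩ := List.length_eq_one_iff.mp hlen2
        have hcb : c = b := List.mem_singleton.mp hc
        subst hcb
        obtain ⟨-, -, -, v, hx2⟩ := h₂.1
        simp only [List.prod_cons, List.prod_nil, mul_one] at hx2
        have hcx : Associated c x := ⟨v, by rw [hx2, mul_comm]⟩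
        have hxc : Associated x c := hcx.symm
        have h11 : l₁.length = 1 := hcirr.2 l₁ (fact_assoc h₁.1 hxc)
        have hle : (l₁.erase a').length = l₁.length - 1 := List.length_erase_of_mem ha'm
        exact he₁ (List.length_eq_zero_iff.mp (by omega))
      obtain ⟨hfe₁, u, hxe₁⟩ := fact_erase h₁.1 ha'm he₁
      obtain ⟨hfe₂, v, hxe₂⟩ := fact_erase h₂.1 hc he₂
      set y := (l₁.erase a').prod with hy
      set z := (l₂.erase c).prod with hz
      obtain ⟨w, hw⟩ := id hca'
      have hcne : c ≠ 0 := hcirr.1.1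
      have h2 : c * ((u : D) * ((w : D) * y)) = c * ((v : D) * z) := by
        calc c * ((u : D) * ((w : D) * y)) = (u : D) * ((c * (w : D)) * y) := by ring
          _ = (u : D) * (a' * y) := by rw [hw]
          _ = (v : D) * (c * z) := by rw [← hxe₁, hxe₂]
          _ = c * ((v : D) * z) := by ring
      have hcancel : (u : D) * ((w : D) * y) = (v : D) * z :=
        mul_left_cancel₀ hcne h2
      have h3 : ((u * w : Dˣ) : D) * y = (v : D) * z := by
        push_cast
        linear_combination hcancel
      have hyeq : y = (((u * w)⁻¹ * v : Dˣ) : D) * z := by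
        calc y = (((u * w)⁻¹ : Dˣ) : D) * (((u * w : Dˣ) : D) * y) := by
              rw [← mul_assoc, Units.inv_mul, one_mul]
          _ = (((u * w)⁻¹ : Dˣ) : D) * ((v : D) * z) := by rw [h3]
          _ = (((u * w)⁻¹ * v : Dˣ) : D) * z := by push_cast; ring
      have hf₂y : TauFact τ (l₂.erase c) y :=
        ⟨he₂, hfe₂.2.1, hfe₂.2.2.1, (u * w)⁻¹ * v, by rw [hyeq, hz]⟩
      have ha₁ : TauAtomicFact τ (l₁.erase a') y :=
        ⟨hfe₁, fun b hb => h₁.2 b (List.mem_of_mem_erase hb)⟩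
      have ha₂ : TauAtomicFact τ (l₂.erase c) y :=
        ⟨hf₂y, fun b hb => h₂.2 b (List.mem_of_mem_erase hb)⟩
      have hlen' : (l₁.erase a').length = n := by
        have h0 := List.length_erase_of_mem ha'm
        omega
      have hrel := ih y (l₁.erase a') (l₂.erase c) hlen' ha₁ ha₂
      have hp₁ : (l₁ : Multiset D) = ((a' :: l₁.erase a' : List D) : Multiset D) :=
        Multiset.coe_eq_coe.mpr (List.perm_cons_erase ha'm)
      have hp₂ : (l₂ : Multiset D) = ((c :: l₂.erase c : List D) : Multiset D) :=
        Multiset.coe_eq_coe.mpr (List.perm_cons_erase hc)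
      rw [hp₁, hp₂, ← Multiset.cons_coe, ← Multiset.cons_coe]
      exact Multiset.Rel.cons (Associated.symm hca') hrel

end Aux

theorem stmt6 {D : Type*} [CommRing D] [IsDomain D] (τ : D → D → Prop)
    (hsym : TauSymm τ) (hap : TauAssocPres τ) (hatomic : TauAtomic τ)
    (hpc : ∀ x : D, NzNonunit x → GPseudoclique τ x) :
    TauUFD τ := by
  classical
  refine ⟨hatomic, fun x l₁ l₂ h₁ h₂ => ?_⟩
  exact uniq_lemma hpc l₁.length x l₁ l₂ rfl h₁ h₂
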